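/- Let γ > 0, κ > 0, α < 0 < β, τ ∈ (0, γ). Suppose φ̄, φ ∈ ℝ with |φ − φ̄| < τ and −γ − κβ < φ < −γ (inactive set J⁺). Define λ̄ = proj_{[-1,1]}(−φ̄/γ) and ū = proj_{[α,β]}(−(1/κ)(φ̄ + γλ̄)). Then |φ̄ + κū + γλ̄| ≤ τ and |φ̄| ≥ γ − τ. -/

import Mathlib

/-- Pointwise content of inclusion (41) for `J⁺`: if `-γ - κβ < φ < -γ` and
`|φ - φ̄| < τ`, then `|φ̄ + κū + γλ̄| ≤ τ` and `|φ̄| ≥ γ - τ`. -/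
theorem stmt_14 (κ γ α β τ φb φ' lb ub : ℝ)
    (hκ : 0 < κ) (hγ : 0 < γ) (hα : α < 0) (hβ : 0 < β) (hτ0 : 0 < τ) (hτγ : τ < γ)
    (hclose : |φ' - φb| < τ) (h1 : -γ - κ * β < φ') (h2 : φ' < -γ)
    (hlb : lb = max (-1) (min 1 (-φb / γ)))
    (hub : ub = max α (min β (-(1/κ) * (φb + γ * lb))))
    : |φb + κ * ub + γ * lb| ≤ τ ∧ γ - τ ≤ |φb| := by
  obtain ⟨hc1, hc2⟩ := abs_lt.mp hclose
  have hb1 : φb < -γ + τ := by linarith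
  have hb2 : -γ - κ*β - τ < φb := by linarith
  have hφbneg : φb < 0 := by linarith
  constructor
  · by_cases hA : -γ ≤ φb
    · have h1' : -φb/γ ≤ 1 := by rw [div_le_one hγ]; linarith
      have h2' : (-1:ℝ) ≤ -φb/γ := by
        have : (0:ℝ) ≤ -φb/γ := div_nonneg (by linarith) hγ.le
        linarith
      have hlb' : lb = -φb/γ := by rw [hlb, min_eq_right h1', max_eq_right h2']
      have hsum : φb + γ * lb = 0 := by rw [hlb']; field_simp; ring
      have hub' : ub = 0 := by
        rw [hub, hsum]
        norm_num [min_eq_right hβ.le, max_eq_right hα.le]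
      rw [hub']
      have : φb + κ*0 + γ*lb = 0 := by linarith [hsum]
      rw [this, abs_zero]; exact hτ0.le
    · push_neg at hA
      have h1' : (1:ℝ) ≤ -φb/γ := by rw [le_div_iff₀ hγ]; linarith
      have hlb' : lb = 1 := by
        rw [hlb, min_eq_left h1', max_eq_right (by norm_num)]
      set s := -(1/κ) * (φb + γ * lb) with hs
      have hspos : 0 < s := by
        rw [hs, hlb']
        have h : φb + γ * 1 < 0 := by linarith
        have hκ' : (0:ℝ) < 1/κ := by positivity
        nlinarith
      by_cases hB : s ≤ β
      · have hub' : ub = s := by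
          rw [hub, min_eq_right hB, max_eq_right (by linarith)]
        have : φb + κ * ub + γ * lb = 0 := by
          rw [hub', hs]; field_simp; ring
        rw [this, abs_zero]; exact hτ0.le
      · push_neg at hB
        have hub' : ub = β := by
          rw [hub, min_eq_left hB.le, max_eq_right (by linarith)]
        have hkb : κ * β < -(φb + γ) := by
          have hB' := hB
          rw [hs, hlb'] at hB'
          have hform : -(1/κ) * (φb + γ * 1) = (-(φb + γ * 1))/κ := by
            field_simp
          rw [hform, lt_div_iff₀ hκ] at hB'
          linarith
        rw [hub', hlb']
        rw [abs_le]
        constructor <;> nlinarith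
  · have : γ - τ ≤ -φb := by linarith
    exact this.trans (neg_le_abs φb)
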